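/- The mutual information of the Z-channel with crossover probability ε ∈ (0,1/2) under input distribution (p, 1-p), given by I(p) = H₂(p(1-ε)) - p·H₂(ε), attains its maximum over p ∈ [0,1] at p* = [(1-ε)(1 + 2^{H₂(ε)/(1-ε)})]^{-1}, with maximum value log₂(1 + 2^{-H₂(ε)/(1-ε)}). -/

import Mathlib

/-- Binary entropy function (base 2). -/
noncomputable def H2 (p : ℝ) : ℝ := -p * Real.logb 2 p - (1 - p) * Real.logb 2 (1 - p)

/-- Mutual information of the Z-channel with crossover probability `ε`
under input distribution `(p, 1-p)`. -/
noncomputable def Iz (ε p : ℝ) : ℝ := H2 (p * (1 - ε)) - p * H2 ε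

lemma logtwo_pos : (0:ℝ) < Real.log 2 := Real.log_pos one_lt_two

/-- Key concavity-type inequality: `H2 q ≤ q*h + log₂(1+2^{-h})` for `q ∈ [0,1]`, `h ≥ 0`. -/
lemma H2_key (h : ℝ) (hh : 0 ≤ h) (q : ℝ) (hq0 : 0 ≤ q) (hq1 : q ≤ 1) :
    H2 q ≤ q * h + Real.logb 2 (1 + (2:ℝ) ^ (-h)) := by
  set s : ℝ := (2:ℝ) ^ (-h) with hs_def
  have hs : 0 < s := Real.rpow_pos_of_pos two_pos _
  have hL : 0 ≤ Real.logb 2 (1 + s) :=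
    Real.logb_nonneg one_lt_two (by linarith)
  rcases eq_or_lt_of_le hq0 with h0 | h0
  · have hz : H2 0 = 0 := by norm_num [H2]
    rw [← h0, hz]
    have : (0:ℝ) * h = 0 := zero_mul h
    linarith
  rcases eq_or_lt_of_le hq1 with h1 | h1
  · have hz : H2 1 = 0 := by norm_num [H2]
    rw [h1, hz]
    linarith
  -- now 0 < q < 1
  have hq1' : 0 < 1 - q := by linarith
  have hlog2 := logtwo_pos
  have hlogs : Real.log s = -h * Real.log 2 := Real.log_rpow two_pos _
  set a : ℝ := s / (1 + s) with ha_def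
  set b : ℝ := 1 / (1 + s) with hb_def
  have h1s : (0:ℝ) < 1 + s := by linarith
  have ha : 0 < a := by positivity
  have hb : 0 < b := by positivity
  have hab : a + b = 1 := by
    rw [ha_def, hb_def]
    field_simp
    ring
  have k1 : Real.log (a / q) ≤ a / q - 1 := Real.log_le_sub_one_of_pos (by positivity)
  have k2 : Real.log (b / (1 - q)) ≤ b / (1 - q) - 1 := Real.log_le_sub_one_of_pos (by positivity)
  have e1 : Real.log (a / q) = Real.log a - Real.log q := Real.log_div ha.ne' h0.ne'
  have e2 : Real.log (b / (1 - q)) = Real.log b - Real.log (1 - q) :=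
    Real.log_div hb.ne' hq1'.ne'
  have key : q * (Real.log a - Real.log q) + (1 - q) * (Real.log b - Real.log (1 - q)) ≤ 0 := by
    have c1 : q * Real.log (a / q) ≤ q * (a / q - 1) :=
      mul_le_mul_of_nonneg_left k1 h0.le
    have c2 : (1 - q) * Real.log (b / (1 - q)) ≤ (1 - q) * (b / (1 - q) - 1) :=
      mul_le_mul_of_nonneg_left k2 hq1'.le
    have r1 : q * (a / q - 1) = a - q := by field_simp
    have r2 : (1 - q) * (b / (1 - q) - 1) = b - (1 - q) := by field_simp
    rw [e1] at c1; rw [e2] at c2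
    nlinarith [c1, c2]
  have hla : Real.log a = Real.log s - Real.log (1 + s) := Real.log_div hs.ne' h1s.ne'
  have hlb : Real.log b = -Real.log (1 + s) := by
    rw [hb_def, Real.log_div one_ne_zero h1s.ne', Real.log_one]; ring
  -- natural-log form of the claim
  have main : -(q * Real.log q) - (1 - q) * Real.log (1 - q)
      ≤ q * h * Real.log 2 + Real.log (1 + s) := by
    rw [hla, hlogs, hlb] at key
    nlinarith [key]
  -- convert to logb
  have hH : H2 q * Real.log 2 = -(q * Real.log q) - (1 - q) * Real.log (1 - q) := by
    simp only [H2, Real.logb, div_eq_mul_inv]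
    field_simp
  have hR : (q * h + Real.logb 2 (1 + s)) * Real.log 2
      = q * h * Real.log 2 + Real.log (1 + s) := by
    simp only [Real.logb, div_eq_mul_inv]
    field_simp
  have : H2 q * Real.log 2 ≤ (q * h + Real.logb 2 (1 + s)) * Real.log 2 := by
    rw [hH, hR]; exact main
  exact le_of_mul_le_mul_right this hlog2

theorem zchannel_mutual_information_max (ε : ℝ) (hε0 : 0 < ε) (hε : ε < 1 / 2) :
    ((1 - ε) * (1 + (2 : ℝ) ^ (H2 ε / (1 - ε))))⁻¹ ∈ Set.Icc (0 : ℝ) 1 ∧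
    (∀ p ∈ Set.Icc (0 : ℝ) 1,
        Iz ε p ≤ Iz ε ((1 - ε) * (1 + (2 : ℝ) ^ (H2 ε / (1 - ε))))⁻¹) ∧
    Iz ε ((1 - ε) * (1 + (2 : ℝ) ^ (H2 ε / (1 - ε))))⁻¹ =
      Real.logb 2 (1 + (2 : ℝ) ^ (-(H2 ε / (1 - ε)))) := by
  have hε1 : (0:ℝ) < 1 - ε := by linarith
  have hεlt1 : ε < 1 := by linarith
  have hH2 : 0 ≤ H2 ε := by
    have l1 : Real.logb 2 ε ≤ 0 := Real.logb_nonpos one_lt_two hε0.le hεlt1.le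
    have l2 : Real.logb 2 (1 - ε) ≤ 0 := Real.logb_nonpos one_lt_two hε1.le (by linarith)
    have := mul_nonneg hε0.le (neg_nonneg.2 l1)
    have := mul_nonneg hε1.le (neg_nonneg.2 l2)
    simp only [H2]; nlinarith
  set h : ℝ := H2 ε / (1 - ε) with hh_def
  have hh : 0 ≤ h := div_nonneg hH2 hε1.le
  set t : ℝ := (2:ℝ) ^ h with ht_def
  have ht : 0 < t := Real.rpow_pos_of_pos two_pos _
  have ht1 : 1 ≤ t := Real.one_le_rpow one_le_two hh
  have h1t : (0:ℝ) < 1 + t := by linarith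
  have hden : (0:ℝ) < (1 - ε) * (1 + t) := by positivity
  set p : ℝ := ((1 - ε) * (1 + t))⁻¹ with hp_def
  have hp0 : 0 ≤ p := by positivity
  have hp1 : p ≤ 1 := by
    rw [hp_def]
    rw [inv_le_one_iff₀]
    right
    nlinarith
  -- q* = p * (1-ε) = (1+t)⁻¹
  have hq : p * (1 - ε) = (1 + t)⁻¹ := by
    rw [hp_def]; field_simp
  have hlogt : Real.logb 2 t = h := Real.logb_rpow two_pos (by norm_num)
  have hinv : (2:ℝ) ^ (-h) = t⁻¹ := Real.rpow_neg (by norm_num) h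
  -- the maximum value
  have hval : Iz ε p = Real.logb 2 (1 + (2:ℝ) ^ (-h)) := by
    have hpH : p * H2 ε = (1 + t)⁻¹ * h := by
      rw [hp_def, hh_def, mul_inv]
      ring
    have h1q : 1 - (1 + t)⁻¹ = t / (1 + t) := by field_simp; ring
    have lq : Real.logb 2 ((1 + t)⁻¹) = -Real.logb 2 (1 + t) := by
      rw [Real.logb_inv]
    have l1q : Real.logb 2 (t / (1 + t)) = h - Real.logb 2 (1 + t) := by
      rw [Real.logb_div ht.ne' h1t.ne', hlogt]
    have rhs : Real.logb 2 (1 + (2:ℝ) ^ (-h)) = Real.logb 2 (1 + t) - h := by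
      rw [hinv]
      have : 1 + t⁻¹ = (1 + t) / t := by field_simp; ring
      rw [this, Real.logb_div h1t.ne' ht.ne', hlogt]
    rw [Iz, hq, hpH, H2, h1q, lq, l1q, rhs]
    field_simp
    ring
  refine ⟨⟨hp0, hp1⟩, ?_, hval⟩
  intro x hx
  obtain ⟨hx0, hx1⟩ := hx
  have hq0 : 0 ≤ x * (1 - ε) := by positivity
  have hq1 : x * (1 - ε) ≤ 1 := by nlinarith
  have hxH : x * H2 ε = (x * (1 - ε)) * h := by
    rw [hh_def]; field_simp
  have := H2_key h hh (x * (1 - ε)) hq0 hq1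
  rw [hval]
  simp only [Iz, hxH]
  linarith
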